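/- Let F : P(Z) → R be G-invariant and of class C¹ (with linear functional derivative ∂F/∂μ and intrinsic derivative D_μF). Then the linear functional derivative is jointly invariant and the intrinsic derivative is jointly equivariant: for all g ∈ G, μ ∈ P(Z), z ∈ Z, (∂F/∂μ)(M_g#μ, M_g·z) = (∂F/∂μ)(μ, z) and D_μF(M_g#μ, M_g·z) = M_g · D_μF(μ, z). -/

import Mathlib

open MeasureTheory Filter Topology
open scoped NNReal

section
variable {Z : Type*} [NormedAddCommGroup Z] [InnerProductSpace ℝ Z] [FiniteDimensional ℝ Z]
  [MeasurableSpace Z] [BorelSpace Z]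

/-- `δF` is a linear functional derivative of `F` on probability measures. -/
def IsLFDeriv (F : Measure Z → ℝ) (δF : Measure Z → Z → ℝ) : Prop :=
  (∀ μ ν : Measure Z, IsProbabilityMeasure μ → IsProbabilityMeasure ν →
    Tendsto (fun h : ℝ≥0 => (F ((1 - h) • μ + h • ν) - F μ) / (h : ℝ))
      (nhdsWithin 0 (Set.Ioi 0)) (nhds ((∫ z, δF μ z ∂ν) - ∫ z, δF μ z ∂μ))) ∧
  (∀ μ : Measure Z, IsProbabilityMeasure μ → ∫ z, δF μ z ∂μ = 0)

/- Statement 16: for a G-invariant C¹ functional, the linear functional derivative is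
   jointly invariant and the intrinsic derivative D_μF(μ,z) = ∇_z (∂F/∂μ)(μ,z) is jointly
   equivariant. -/
lemma gradient_comp_isometry (A : Z ≃ₗᵢ[ℝ] Z) (f : Z → ℝ) (x : Z) :
    gradient f (A x) = A (gradient (f ∘ A) x) := by
  by_cases hd : DifferentiableAt ℝ f (A x)
  · have hA : HasFDerivAt (⇑A) (A.toContinuousLinearEquiv : Z →L[ℝ] Z) x :=
      A.toContinuousLinearEquiv.hasFDerivAt
    have hfA : HasFDerivAt f ((InnerProductSpace.toDual ℝ Z) (gradient f (A x))) (A x) :=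
      hasGradientAt_iff_hasFDerivAt.mp hd.hasGradientAt
    have hcomp := hfA.comp x hA
    have heq : (((InnerProductSpace.toDual ℝ Z) (gradient f (A x))).comp
        (A.toContinuousLinearEquiv : Z →L[ℝ] Z)) =
        (InnerProductSpace.toDual ℝ Z) (A.symm (gradient f (A x))) := by
      ext v
      simp only [ContinuousLinearMap.comp_apply, InnerProductSpace.toDual_apply_apply]
      have := A.inner_map_map (A.symm (gradient f (A x))) v
      simp only [LinearIsometryEquiv.apply_symm_apply] at this
      simpa using this
    rw [heq] at hcomp
    have : HasGradientAt (f ∘ A) (A.symm (gradient f (A x))) x :=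
      hasGradientAt_iff_hasFDerivAt.mpr hcomp
    rw [this.gradient, LinearIsometryEquiv.apply_symm_apply]
  · have h1 : gradient f (A x) = 0 := gradient_eq_zero_of_not_differentiableAt hd
    have h2 : ¬ DifferentiableAt ℝ (f ∘ A) x := by
      intro h
      have : DifferentiableAt ℝ ((f ∘ A) ∘ A.symm) (A x) := by
        have h' : DifferentiableAt ℝ (f ∘ ⇑A) (A.symm (A x)) := by simpa using h
        exact h'.comp (A x) A.symm.toContinuousLinearEquiv.differentiableAt
      apply hd
      convert this using 1
      ext y; simp
    rw [h1, gradient_eq_zero_of_not_differentiableAt h2, map_zero]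


theorem lfd_of_invariant_functional
    {G : Type*} [Group G] [TopologicalSpace G] [IsTopologicalGroup G] [CompactSpace G]
    (M : G → Z ≃ₗᵢ[ℝ] Z)
    (hrep : ∀ g h z, M (g * h) z = M g (M h z))
    (F : Measure Z → ℝ) (δF : Measure Z → Z → ℝ)
    (hlfd : IsLFDeriv F δF)
    (huniq : ∀ δ' : Measure Z → Z → ℝ, IsLFDeriv F δ' →
      ∀ (μ : Measure Z), IsProbabilityMeasure μ → ∀ z, δ' μ z = δF μ z)
    (hbdd : ∀ μ : Measure Z, IsProbabilityMeasure μ → ∃ C : ℝ, ∀ z, |δF μ z| ≤ C)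
    (hcont : ∀ μ : Measure Z, IsProbabilityMeasure μ → Continuous (δF μ))
    (hFinv : ∀ (g : G) (μ : Measure Z), IsProbabilityMeasure μ →
      F (μ.map (M g)) = F μ) :
    ∀ (g : G) (μ : Measure Z), IsProbabilityMeasure μ → ∀ z : Z,
      δF (μ.map (M g)) (M g z) = δF μ z ∧
      gradient (δF (μ.map (M g))) (M g z) = M g (gradient (δF μ) z) := by
  intro g
  have hTm : Measurable (⇑(M g)) := (M g).continuous.measurable
  have hmapP : ∀ ν : Measure Z, IsProbabilityMeasure ν →
      IsProbabilityMeasure (ν.map (M g)) := fun ν hν =>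
    Measure.isProbabilityMeasure_map hTm.aemeasurable
  have key : ∀ (μ : Measure Z), IsProbabilityMeasure μ → ∀ z,
      δF (μ.map (M g)) (M g z) = δF μ z := by
    have hlfd' : IsLFDeriv F (fun μ z => δF (μ.map (M g)) (M g z)) := by
      constructor
      · intro μ ν hμ hν
        have hμ' := hmapP μ hμ
        have hν' := hmapP ν hν
        have h1 := hlfd.1 (μ.map (M g)) (ν.map (M g)) hμ' hν'
        have hiν : ∫ z, δF (μ.map (M g)) z ∂(ν.map (M g)) =
            ∫ z, δF (μ.map (M g)) ((M g) z) ∂ν :=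
          integral_map hTm.aemeasurable (hcont _ hμ').aestronglyMeasurable
        have hiμ : ∫ z, δF (μ.map (M g)) z ∂(μ.map (M g)) =
            ∫ z, δF (μ.map (M g)) ((M g) z) ∂μ :=
          integral_map hTm.aemeasurable (hcont _ hμ').aestronglyMeasurable
        rw [hiν, hiμ] at h1
        refine h1.congr' ?_
        have hlt : ∀ᶠ h : ℝ≥0 in nhdsWithin 0 (Set.Ioi 0), h < 1 :=
          eventually_nhdsWithin_of_eventually_nhds (Filter.Tendsto.eventually_lt_const
            (by norm_num) tendsto_id)
        filter_upwards [hlt] with h hh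
        have hP : IsProbabilityMeasure ((1 - h) • μ + h • ν) := by
          constructor
          simp only [Measure.add_apply, Measure.smul_apply, measure_univ,
            ENNReal.smul_def, smul_eq_mul, mul_one]
          rw [← ENNReal.coe_add, tsub_add_cancel_of_le hh.le, ENNReal.coe_one]
        have e1 : F ((1 - h) • μ.map (M g) + h • ν.map (M g)) =
            F ((1 - h) • μ + h • ν) := by
          rw [← Measure.map_smul, ← Measure.map_smul, ← Measure.map_add _ _ hTm]
          exact hFinv g _ hP
        rw [e1, hFinv g μ hμ]
      · intro μ hμ
        have := hlfd.2 (μ.map (M g)) (hmapP μ hμ)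
        rwa [integral_map hTm.aemeasurable
          (hcont _ (hmapP μ hμ)).aestronglyMeasurable] at this
    intro μ hμ z
    exact huniq _ hlfd' μ hμ z
  intro μ hμ z
  refine ⟨key μ hμ z, ?_⟩
  have hfun : δF μ = (δF (μ.map (M g))) ∘ ⇑(M g) := by
    funext w; exact (key μ hμ w).symm
  rw [hfun]
  exact gradient_comp_isometry (M g) (δF (μ.map (M g))) z


end
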